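/- Let q = p^2 for a prime power p, and let 0 < α < 1. There exists a set L of (α + o(1))·q^{7/2} lines in F_q^3 such that no plane contains more than (α + o(1))·q^{3/2} lines of L, and the union of the lines of L has exactly q^3 − (1 − α + o(1))·q^{5/2} points. -/

import Mathlib

set_option linter.unusedSectionVars false
set_option maxHeartbeats 1000000

open scoped Classical

/-- `ℓ` is an (affine) line in `F^3`. -/
def IsLine {F : Type} [Field F] (ℓ : Set (Fin 3 → F)) : Prop :=
  ∃ a b : Fin 3 → F, b ≠ 0 ∧ ℓ = {x | ∃ t : F, x = a + t • b}

/-- The (affine) plane through `a` spanned by directions `u, v`. -/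
def affPlane {F : Type} [Field F] (a u v : Fin 3 → F) : Set (Fin 3 → F) :=
  {x | ∃ s t : F, x = a + s • u + t • v}

namespace S19

open Finset

variable {F : Type} [Field F] [Fintype F]

/-- number of roots of x^n = c is at most n -/
lemma card_pow_eq_le (n : ℕ) (hn : 0 < n) (c : F) :
    (Finset.univ.filter (fun x : F => x ^ n = c)).card ≤ n := by
  have hne : (Polynomial.X ^ n - Polynomial.C c : Polynomial F) ≠ 0 :=
    Polynomial.X_pow_sub_C_ne_zero hn c
  have hsub : Finset.univ.filter (fun x : F => x ^ n = c) ⊆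
      (Polynomial.X ^ n - Polynomial.C c : Polynomial F).roots.toFinset := by
    intro x hx
    simp only [Finset.mem_filter, Finset.mem_univ, true_and] at hx
    simp [Polynomial.mem_roots, hne, Polynomial.IsRoot, sub_eq_zero, hx]
  calc (Finset.univ.filter (fun x : F => x ^ n = c)).card
      ≤ (Polynomial.X ^ n - Polynomial.C c : Polynomial F).roots.toFinset.card :=
        Finset.card_le_card hsub
    _ ≤ Multiset.card (Polynomial.X ^ n - Polynomial.C c : Polynomial F).roots :=
        Multiset.toFinset_card_le _
    _ ≤ (Polynomial.X ^ n - Polynomial.C c : Polynomial F).natDegree :=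
        Polynomial.card_roots' _
    _ = n := Polynomial.natDegree_X_pow_sub_C

/-- number of roots of x^n + x = c is at most n (n ≥ 2) -/
lemma card_pow_add_eq_le (n : ℕ) (hn : 2 ≤ n) (c : F) :
    (Finset.univ.filter (fun x : F => x ^ n + x = c)).card ≤ n := by
  set f : Polynomial F := Polynomial.X ^ n + Polynomial.X - Polynomial.C c with hf
  have hdeg : f.natDegree = n := by
    rw [hf]
    compute_degree
    · have h1 : ¬(1 = n) := by omega
      have h2 : ¬(n = 0) := by omega
      simp [h1, h2]
    · omega
  have hne : f ≠ 0 := by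
    intro h
    rw [h] at hdeg
    simp at hdeg
    omega
  have hsub : Finset.univ.filter (fun x : F => x ^ n + x = c) ⊆ f.roots.toFinset := by
    intro x hx
    simp only [Finset.mem_filter, Finset.mem_univ, true_and] at hx
    rw [Multiset.mem_toFinset, Polynomial.mem_roots hne]
    simp [Polynomial.IsRoot, hf, sub_eq_zero, hx]
  calc (Finset.univ.filter (fun x : F => x ^ n + x = c)).card
      ≤ f.roots.toFinset.card := Finset.card_le_card hsub
    _ ≤ Multiset.card f.roots := Multiset.toFinset_card_le _
    _ ≤ f.natDegree := Polynomial.card_roots' _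
    _ = n := hdeg

lemma card_pow_sub_le (n : ℕ) (hn : 2 ≤ n) :
    (Finset.univ.filter (fun x : F => x ^ n = x)).card ≤ n := by
  set f : Polynomial F := Polynomial.X ^ n - Polynomial.X with hf
  have hdeg : f.natDegree = n := by
    rw [hf]
    compute_degree
    · have h1 : ¬(1 = n) := by omega
      simp [h1]
    · omega
  have hne : f ≠ 0 := by
    intro h
    rw [h] at hdeg
    simp at hdeg
    omega
  have hsub : Finset.univ.filter (fun x : F => x ^ n = x) ⊆ f.roots.toFinset := by
    intro x hx
    simp only [Finset.mem_filter, Finset.mem_univ, true_and] at hx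
    rw [Multiset.mem_toFinset, Polynomial.mem_roots hne]
    simp [Polynomial.IsRoot, hf, sub_eq_zero, hx]
  calc (Finset.univ.filter (fun x : F => x ^ n = x)).card
      ≤ f.roots.toFinset.card := Finset.card_le_card hsub
    _ ≤ Multiset.card f.roots := Multiset.toFinset_card_le _
    _ ≤ f.natDegree := Polynomial.card_roots' _
    _ = n := hdeg

section FieldFacts

variable (p : ℕ)

lemma hpp_of (hcard : Fintype.card F = p ^ 2) : ∀ x : F, (x ^ p) ^ p = x := by
  intro x
  rw [← pow_mul, ← sq, ← hcard]
  exact FiniteField.pow_card x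

lemma hneg_of (hp : 0 < p) (hfa : ∀ x y : F, (x + y) ^ p = x ^ p + y ^ p) :
    ∀ x : F, (-x) ^ p = -(x ^ p) := by
  intro x
  have h := hfa x (-x)
  simp only [add_neg_cancel] at h
  rw [zero_pow (by omega : p ≠ 0)] at h
  linear_combination -h

lemma hsub_of (hp : 0 < p) (hfa : ∀ x y : F, (x + y) ^ p = x ^ p + y ^ p) :
    ∀ x y : F, (x - y) ^ p = x ^ p - y ^ p := by
  intro x y
  rw [sub_eq_add_neg, hfa, hneg_of p hp hfa, sub_eq_add_neg]

/-- the "trace-fixed" subfield elements -/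
noncomputable def kfix (F : Type) [Field F] [Fintype F] (p : ℕ) : Finset F :=
  Finset.univ.filter fun c : F => c ^ p = c

noncomputable def tker (F : Type) [Field F] [Fintype F] (p : ℕ) : Finset F :=
  Finset.univ.filter fun z : F => z + z ^ p = 0

noncomputable def trim (F : Type) [Field F] [Fintype F] (p : ℕ) : Finset F :=
  Finset.univ.image fun z : F => z + z ^ p

lemma trim_subset_kfix (hcard : Fintype.card F = p ^ 2)
    (hfa : ∀ x y : F, (x + y) ^ p = x ^ p + y ^ p) : trim F p ⊆ kfix F p := by
  intro c hc
  simp only [trim, Finset.mem_image, Finset.mem_univ, true_and] at hc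
  obtain ⟨z, rfl⟩ := hc
  simp only [kfix, Finset.mem_filter, Finset.mem_univ, true_and]
  rw [hfa, hpp_of p hcard, add_comm]

lemma tr_fiber_card (hp : 0 < p) (hfa : ∀ x y : F, (x + y) ^ p = x ^ p + y ^ p)
    (c : F) (hc : ∃ z : F, z + z ^ p = c) :
    (Finset.univ.filter fun z : F => z + z ^ p = c).card = (tker F p).card := by
  obtain ⟨z0, hz0⟩ := hc
  apply Finset.card_bij (fun z _ => z - z0)
  · intro z hz
    simp only [Finset.mem_filter, Finset.mem_univ, true_and] at hz ⊢
    simp only [tker, Finset.mem_filter, Finset.mem_univ, true_and]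
    rw [hsub_of p hp hfa]
    rw [← hz0] at hz
    linear_combination hz
  · intro a _ b _ h
    exact sub_left_injective h
  · intro w hw
    simp only [tker, Finset.mem_filter, Finset.mem_univ, true_and] at hw
    refine ⟨w + z0, ?_, by ring⟩
    simp only [Finset.mem_filter, Finset.mem_univ, true_and]
    rw [hfa]
    linear_combination hw + hz0

lemma counts_of (hp : 2 ≤ p) (hcard : Fintype.card F = p ^ 2)
    (hfa : ∀ x y : F, (x + y) ^ p = x ^ p + y ^ p) :
    (tker F p).card = p ∧ (kfix F p) = trim F p ∧ (kfix F p).card = p := by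
  have hp0 : 0 < p := by omega
  have h1 : (trim F p).card * (tker F p).card = p ^ 2 := by
    have hcf : (Finset.univ : Finset F).card
        = ∑ c ∈ trim F p, (Finset.univ.filter fun z : F => z + z ^ p = c).card := by
      apply Finset.card_eq_sum_card_fiberwise
      intro x _
      exact Finset.mem_coe.mpr (Finset.mem_image_of_mem _ (Finset.mem_univ x))
    rw [Finset.card_univ, hcard] at hcf
    have hsum : ∑ c ∈ trim F p, (Finset.univ.filter fun z : F => z + z ^ p = c).card
        = (trim F p).card * (tker F p).card := by
      rw [Finset.sum_congr rfl (fun c hc => tr_fiber_card p hp0 hfa c (by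
        simpa only [trim, Finset.mem_image, Finset.mem_univ, true_and] using hc))]
      rw [Finset.sum_const, smul_eq_mul]
    exact (hcf.trans hsum).symm
  have h2 : (trim F p).card ≤ p :=
    le_trans (Finset.card_le_card (trim_subset_kfix p hcard hfa)) (card_pow_sub_le p hp)
  have h3 : (tker F p).card ≤ p := by
    have h := card_pow_add_eq_le (F := F) p hp 0
    have he : tker F p = Finset.univ.filter fun x : F => x ^ p + x = 0 := by
      ext z
      simp [tker, add_comm]
    rw [he]
    exact h
  have hsq : p ^ 2 = p * p := sq p
  have htk : (tker F p).card = p := by nlinarith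
  have hti : (trim F p).card = p := by nlinarith
  have hkt : kfix F p = trim F p := by
    apply (Finset.eq_of_subset_of_card_le (trim_subset_kfix p hcard hfa) ?_).symm
    rw [hti]
    exact card_pow_sub_le p hp
  exact ⟨htk, hkt, by rw [hkt, hti]⟩

lemma norm_fix (hcard : Fintype.card F = p ^ 2) :
    ∀ x : F, (x ^ (p + 1)) ^ p = x ^ (p + 1) := by
  intro x
  rw [← pow_mul]
  have : (p + 1) * p = p * p + p := by ring
  rw [this, pow_add]
  have h2 : x ^ (p * p) = x := by
    rw [← sq, ← hcard]
    exact FiniteField.pow_card x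
  rw [h2, ← pow_succ']

lemma tr_fiber_eq_p (hp : 2 ≤ p) (hcard : Fintype.card F = p ^ 2)
    (hfa : ∀ x y : F, (x + y) ^ p = x ^ p + y ^ p) :
    ∀ c : F, c ^ p = c → (Finset.univ.filter fun z : F => z + z ^ p = c).card = p := by
  intro c hc
  obtain ⟨htk, hkt, _⟩ := counts_of p hp hcard hfa
  have hcim : c ∈ trim F p := by
    rw [← hkt]
    simp only [kfix, Finset.mem_filter, Finset.mem_univ, true_and]
    exact hc
  simp only [trim, Finset.mem_image, Finset.mem_univ, true_and] at hcim
  rw [tr_fiber_card p (by omega) hfa c hcim, htk]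

lemma exists_eta (hp : 2 ≤ p) (hcard : Fintype.card F = p ^ 2)
    (hfa : ∀ x y : F, (x + y) ^ p = x ^ p + y ^ p) :
    ∃ η : F, η ^ (p + 1) = -1 := by
  by_contra hno
  push_neg at hno
  obtain ⟨_, _, hkc⟩ := counts_of p hp hcard hfa
  set K2 : Finset F := ((kfix F p).erase (0 : F)).erase (-1 : F) with hK2
  have hcover : Finset.univ.filter (fun x : F => x ≠ 0) ⊆
      K2.biUnion (fun c => Finset.univ.filter fun x : F => x ^ (p + 1) = c) := by
    intro x hx
    simp only [Finset.mem_filter, Finset.mem_univ, true_and] at hx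
    rw [Finset.mem_biUnion]
    refine ⟨x ^ (p + 1), ?_, by simp⟩
    rw [hK2, Finset.mem_erase, Finset.mem_erase]
    refine ⟨hno x, pow_ne_zero _ hx, ?_⟩
    simp only [kfix, Finset.mem_filter, Finset.mem_univ, true_and]
    exact norm_fix p hcard x
  have hL : (Finset.univ.filter (fun x : F => x ≠ 0)).card = p ^ 2 - 1 := by
    rw [Finset.filter_ne', Finset.card_erase_of_mem (Finset.mem_univ _), Finset.card_univ, hcard]
  have hm0 : (0 : F) ∈ kfix F p := by
    simp only [kfix, Finset.mem_filter, Finset.mem_univ, true_and]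
    exact zero_pow (by omega : p ≠ 0)
  have hm1 : (-1 : F) ∈ (kfix F p).erase (0 : F) := by
    rw [Finset.mem_erase]
    refine ⟨neg_ne_zero.mpr one_ne_zero, ?_⟩
    simp only [kfix, Finset.mem_filter, Finset.mem_univ, true_and]
    have h := hneg_of p (by omega) hfa (1 : F)
    simpa using h
  have hK2c : K2.card = p - 2 := by
    rw [hK2, Finset.card_erase_of_mem hm1, Finset.card_erase_of_mem hm0, hkc]
    omega
  have hR : (K2.biUnion (fun c => Finset.univ.filter fun x : F => x ^ (p + 1) = c)).card
      ≤ (p - 2) * (p + 1) := by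
    refine le_trans (Finset.card_biUnion_le) ?_
    rw [← hK2c]
    rw [← smul_eq_mul, ← Finset.sum_const]
    exact Finset.sum_le_sum fun c _ => card_pow_eq_le (p + 1) (by omega) c
  have hle : p ^ 2 - 1 ≤ (p - 2) * (p + 1) := by
    rw [← hL]
    exact le_trans (Finset.card_le_card hcover) hR
  obtain ⟨b, rfl⟩ : ∃ b, p = b + 2 := ⟨p - 2, by omega⟩
  have e1 : (b + 2) ^ 2 = b * b + 4 * b + 4 := by ring
  have e2 : (b + 2 - 2) * (b + 2 + 1) = b * b + 3 * b := by
    have : b + 2 - 2 = b := by omega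
    rw [this]; ring
  omega

/-- the Hermitian generator index set -/
noncomputable def gen (F : Type) [Field F] [Fintype F] (p : ℕ) : Finset (F × F) :=
  (Finset.univ ×ˢ Finset.univ).filter fun y : F × F => y.2 + y.2 ^ p = y.1 ^ (p + 1)

lemma gen_card (hp : 2 ≤ p) (hcard : Fintype.card F = p ^ 2)
    (hfa : ∀ x y : F, (x + y) ^ p = x ^ p + y ^ p) :
    (gen F p).card = p ^ 2 * p := by
  have hfib : (gen F p).card
      = ∑ y1 ∈ (Finset.univ : Finset F), ((gen F p).filter fun y => y.1 = y1).card :=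
    Finset.card_eq_sum_card_fiberwise (fun y _ => Finset.mem_univ y.1)
  rw [hfib]
  have hinner : ∀ y1 : F, ((gen F p).filter fun y => y.1 = y1).card = p := by
    intro y1
    have hbij : ((gen F p).filter fun y => y.1 = y1).card
        = (Finset.univ.filter fun z : F => z + z ^ p = y1 ^ (p + 1)).card := by
      apply Finset.card_bij (fun y _ => y.2)
      · intro y hy
        simp only [gen, Finset.mem_filter, Finset.mem_product] at hy
        simp only [Finset.mem_filter, Finset.mem_univ, true_and]
        rw [← hy.2]
        exact hy.1.2
      · intro a ha b hb h
        simp only [gen, Finset.mem_filter] at ha hb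
        have : a.1 = b.1 := by rw [ha.2, hb.2]
        exact Prod.ext this h
      · intro z hz
        simp only [Finset.mem_filter, Finset.mem_univ, true_and] at hz
        refine ⟨(y1, z), ?_, rfl⟩
        simp [gen, hz]
    rw [hbij]
    exact tr_fiber_eq_p p hp hcard hfa _ (norm_fix p hcard y1)
  rw [Finset.sum_congr rfl fun y1 _ => hinner y1, Finset.sum_const, smul_eq_mul,
    Finset.card_univ, hcard]

end FieldFacts
lemma v3_0 (a b c : F) : (![a,b,c] : Fin 3 → F) 0 = a := rfl
lemma v3_1 (a b c : F) : (![a,b,c] : Fin 3 → F) 1 = b := rfl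
lemma v3_2 (a b c : F) : (![a,b,c] : Fin 3 → F) 2 = c := rfl
lemma addsmul_app (x d : Fin 3 → F) (t : F) (i : Fin 3) : (x + t • d) i = x i + t * d i := rfl
lemma eq3 (x y : Fin 3 → F) (h0 : x 0 = y 0) (h1 : x 1 = y 1) (h2 : x 2 = y 2) : x = y := by
  funext i
  fin_cases i <;> assumption

section Geometry

variable (p : ℕ) (η : F)

/-- point of the partition line indexed by `y` at parameter `t` -/
def ptP (y : F × F) (t : F) : Fin 3 → F := ![y.1 + t * η, t, y.2 + t * (η * y.1 ^ p)]

/-- partition line -/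
def Lline (y : F × F) : Set (Fin 3 → F) := {x | ∃ t : F, x = ptP p η y t}

/-- index of the partition line through `x` -/
def yof (x : Fin 3 → F) : F × F :=
  (x 0 - η * x 1, x 2 - x 1 * (η * (x 0 - η * x 1) ^ p))

/-- the Hermitian-pencil function -/
def gf (x : Fin 3 → F) : F := x 2 + (x 2) ^ p - (x 0) ^ (p + 1) - (x 1) ^ (p + 1)

/-- tangent direction at `a` indexed by `d1` -/
def tdir (a : Fin 3 → F) (d1 : F) : Fin 3 → F := ![d1, 1, (a 0) ^ p * d1 + (a 1) ^ p]

/-- tangent line at `a` -/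
def Tline (a : Fin 3 → F) (d1 : F) : Set (Fin 3 → F) := {x | ∃ t : F, x = a + t • tdir p a d1}

lemma mem_Lline_iff {x : Fin 3 → F} {y : F × F} : x ∈ Lline p η y ↔ y = yof p η x := by
  constructor
  · rintro ⟨t, rfl⟩
    unfold yof ptP
    simp only [v3_0, v3_1, v3_2]
    apply Prod.ext <;> simp <;> ring
  · rintro rfl
    refine ⟨x 1, ?_⟩
    apply eq3 <;> unfold ptP yof <;> simp [v3_0, v3_1, v3_2] <;> ring

lemma self_mem_Lline (x : Fin 3 → F) : x ∈ Lline p η (yof p η x) :=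
  (mem_Lline_iff p η).mpr rfl

lemma gf_ptP (hp : 0 < p) (hfa : ∀ x y : F, (x + y) ^ p = x ^ p + y ^ p)
    (hpp : ∀ x : F, (x ^ p) ^ p = x) (hη : η ^ (p + 1) = -1) (y : F × F) (t : F) :
    gf p (ptP p η y t) = y.2 + y.2 ^ p - y.1 ^ (p + 1) := by
  unfold gf ptP
  simp only [v3_0, v3_1, v3_2]
  have e1 : (y.1 + t * η) ^ (p + 1) = (y.1 ^ p + t ^ p * η ^ p) * (y.1 + t * η) := by
    rw [pow_succ, hfa, mul_pow]
  have e2 : (y.2 + t * (η * y.1 ^ p)) ^ p = y.2 ^ p + t ^ p * (η ^ p * y.1) := by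
    rw [hfa, mul_pow, mul_pow, hpp]
  have e3 : t ^ (p + 1) = t ^ p * t := pow_succ t p
  have e4 : η ^ p * η = -1 := by rw [← pow_succ]; exact hη
  rw [e1, e2, e3]
  linear_combination (-(t ^ p * t)) * e4

lemma gf_tline (hp : 0 < p) (hfa : ∀ x y : F, (x + y) ^ p = x ^ p + y ^ p)
    (hpp : ∀ x : F, (x ^ p) ^ p = x) (a : Fin 3 → F) (d1 t : F) :
    gf p (a + t • tdir p a d1) = gf p a - t ^ (p + 1) * (d1 ^ (p + 1) + 1) := by
  unfold gf tdir
  simp only [addsmul_app, v3_0, v3_1, v3_2]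
  have e1 : (a 0 + t * d1) ^ (p + 1) = (a 0 ^ p + t ^ p * d1 ^ p) * (a 0 + t * d1) := by
    rw [pow_succ, hfa, mul_pow]
  have e2 : (a 1 + t * 1) ^ (p + 1) = (a 1 ^ p + t ^ p * 1) * (a 1 + t * 1) := by
    rw [pow_succ, hfa, mul_pow, one_pow]
  have e3 : (a 2 + t * (a 0 ^ p * d1 + a 1 ^ p)) ^ p
      = a 2 ^ p + t ^ p * (a 0 * d1 ^ p + a 1) := by
    rw [hfa, mul_pow, hfa, mul_pow, hpp, hpp]
  have e4 : t ^ (p + 1) = t ^ p * t := pow_succ t p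
  have e5 : d1 ^ (p + 1) = d1 ^ p * d1 := pow_succ d1 p
  have e6 : (a 0) ^ (p + 1) = (a 0) ^ p * a 0 := pow_succ _ p
  have e7 : (a 1) ^ (p + 1) = (a 1) ^ p * a 1 := pow_succ _ p
  rw [e1, e2, e3, e4, e5, e6, e7]
  ring

lemma tline_inter (hp : 0 < p) (hfa : ∀ x y : F, (x + y) ^ p = x ^ p + y ^ p)
    (hpp : ∀ x : F, (x ^ p) ^ p = x) {a x : Fin 3 → F} {d1 : F}
    (hg : gf p a = 0) (hd : d1 ^ (p + 1) ≠ -1) (hx : x ∈ Tline p a d1)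
    (hgx : gf p x = 0) : x = a := by
  obtain ⟨t, rfl⟩ := hx
  rw [gf_tline p hp hfa hpp, hg] at hgx
  have hν : d1 ^ (p + 1) + 1 ≠ 0 := fun h => hd (by linear_combination h)
  have hmul : t ^ (p + 1) * (d1 ^ (p + 1) + 1) = 0 := by linear_combination -hgx
  have ht : t ^ (p + 1) = 0 := by
    rcases mul_eq_zero.mp hmul with h | h
    · exact h
    · exact absurd h hν
  have ht0 : t = 0 := pow_eq_zero_iff (by omega : p + 1 ≠ 0) |>.mp ht
  rw [ht0]
  apply eq3 <;> simp [addsmul_app]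

lemma self_mem_Tline (a : Fin 3 → F) (d1 : F) : a ∈ Tline p a d1 :=
  ⟨0, by apply eq3 <;> simp [addsmul_app]⟩

lemma snd_mem_Tline (a : Fin 3 → F) (d1 : F) : a + (1 : F) • tdir p a d1 ∈ Tline p a d1 :=
  ⟨1, rfl⟩

end Geometry


section Construction

variable (p : ℕ) (η : F) (Γ : Finset (F × F))

noncomputable def Dset (F : Type) [Field F] [Fintype F] (p : ℕ) : Finset F :=
  Finset.univ.filter fun d1 : F => d1 ^ (p + 1) ≠ -1

noncomputable def Cpts : Finset (Fin 3 → F) :=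
  (Γ ×ˢ (Finset.univ : Finset F)).image fun z : (F × F) × F => ptP p η z.1 z.2

noncomputable def Ycov : Finset (F × F) :=
  ((Finset.univ : Finset F) ×ˢ (Finset.univ : Finset F)) \ (gen F p \ Γ)

noncomputable def Lcov : Finset (Set (Fin 3 → F)) :=
  (Ycov p Γ).image fun y => Lline p η y

noncomputable def Lbulk : Finset (Set (Fin 3 → F)) :=
  ((Cpts p η Γ) ×ˢ (Dset F p)).image fun z => Tline p z.1 z.2

noncomputable def Lfin : Finset (Set (Fin 3 → F)) := Lcov p η Γ ∪ Lbulk p η Γ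

lemma isline_Lline (y : F × F) : IsLine (Lline p η y) := by
  refine ⟨![y.1, 0, y.2], ![η, 1, η * y.1 ^ p], ?_, ?_⟩
  · intro h
    have := congrFun h 1
    rw [v3_1] at this
    simp at this
  · ext x
    constructor
    · rintro ⟨t, rfl⟩
      refine ⟨t, ?_⟩
      apply eq3 <;> simp [ptP, v3_0, v3_1, v3_2, addsmul_app] <;> ring
    · rintro ⟨t, rfl⟩
      refine ⟨t, ?_⟩
      apply eq3 <;> simp [ptP, v3_0, v3_1, v3_2, addsmul_app] <;> ring

lemma isline_Tline (a : Fin 3 → F) (d1 : F) : IsLine (Tline p a d1) := by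
  refine ⟨a, tdir p a d1, ?_, rfl⟩
  intro h
  have := congrFun h 1
  rw [show tdir p a d1 1 = 1 from rfl] at this
  simp at this

variable {p η Γ}

lemma gf_Cpts (hp : 0 < p) (hfa : ∀ x y : F, (x + y) ^ p = x ^ p + y ^ p)
    (hpp : ∀ x : F, (x ^ p) ^ p = x) (hη : η ^ (p + 1) = -1)
    (hΓ : Γ ⊆ gen F p) {a : Fin 3 → F} (ha : a ∈ Cpts p η Γ) : gf p a = 0 := by
  simp only [Cpts, Finset.mem_image, Finset.mem_product, Finset.mem_univ, and_true] at ha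
  obtain ⟨⟨y, t⟩, hy, rfl⟩ := ha
  rw [gf_ptP p η hp hfa hpp hη]
  have hg := hΓ hy
  simp only [gen, Finset.mem_filter] at hg
  rw [hg.2]
  ring

lemma yof_Cpts {a : Fin 3 → F} (ha : a ∈ Cpts p η Γ) : yof p η a ∈ Γ := by
  simp only [Cpts, Finset.mem_image, Finset.mem_product, Finset.mem_univ, and_true] at ha
  obtain ⟨⟨y, t⟩, hy, rfl⟩ := ha
  have : ptP p η y t ∈ Lline p η y := ⟨t, rfl⟩
  rw [(mem_Lline_iff p η).mp this] at hy
  exact hy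

lemma ptP_injOn : ∀ (z : (F × F) × F) (z' : (F × F) × F),
    ptP p η z.1 z.2 = ptP p η z'.1 z'.2 → z = z' := by
  rintro ⟨⟨y1, y3⟩, t⟩ ⟨⟨y1', y3'⟩, t'⟩ h
  have h0 := congrFun h 0
  have h1 := congrFun h 1
  have h2 := congrFun h 2
  simp only [ptP, v3_0, v3_1, v3_2] at h0 h1 h2
  subst h1
  have hy1 : y1 = y1' := by linear_combination h0
  subst hy1
  have hy3 : y3 = y3' := by linear_combination h2
  subst hy3
  rfl

lemma Cpts_card : (Cpts p η Γ).card = Γ.card * Fintype.card F := by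
  unfold Cpts
  rw [Finset.card_image_of_injOn (fun z _ z' _ h => ptP_injOn z z' h),
    Finset.card_product, Finset.card_univ]

lemma Tline_injOn (hp : 0 < p) (hfa : ∀ x y : F, (x + y) ^ p = x ^ p + y ^ p)
    (hpp : ∀ x : F, (x ^ p) ^ p = x) (hη : η ^ (p + 1) = -1) (hΓ : Γ ⊆ gen F p)
    {z z' : (Fin 3 → F) × F} (hz : z ∈ (Cpts p η Γ) ×ˢ (Dset F p))
    (hz' : z' ∈ (Cpts p η Γ) ×ˢ (Dset F p))
    (h : Tline p z.1 z.2 = Tline p z'.1 z'.2) : z = z' := by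
  obtain ⟨a, d1⟩ := z
  obtain ⟨a', d1'⟩ := z'
  rw [Finset.mem_product] at hz hz'
  have hd1 : d1 ^ (p + 1) ≠ -1 := by
    have := hz.2; simpa [Dset] using this
  have hd1' : d1' ^ (p + 1) ≠ -1 := by
    have := hz'.2; simpa [Dset] using this
  have ha : a = a' := by
    apply tline_inter p hp hfa hpp (gf_Cpts hp hfa hpp hη hΓ hz'.1) hd1'
    · rw [← h]; exact self_mem_Tline p a d1
    · exact gf_Cpts hp hfa hpp hη hΓ hz.1
  subst ha
  have hmem : a + (1 : F) • tdir p a d1 ∈ Tline p a d1' := by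
    rw [← h]; exact snd_mem_Tline p a d1
  obtain ⟨t, ht⟩ := hmem
  have h1 := congrFun ht 1
  have h0 := congrFun ht 0
  simp only [addsmul_app, show tdir p a d1 1 = 1 from rfl, show tdir p a d1' 1 = 1 from rfl,
    show tdir p a d1 0 = d1 from rfl, show tdir p a d1' 0 = d1' from rfl] at h0 h1
  have ht1 : t = 1 := by linear_combination -h1
  subst ht1
  have : d1 = d1' := by linear_combination h0
  rw [this]

lemma Lbulk_card (hp : 0 < p) (hfa : ∀ x y : F, (x + y) ^ p = x ^ p + y ^ p)
    (hpp : ∀ x : F, (x ^ p) ^ p = x) (hη : η ^ (p + 1) = -1) (hΓ : Γ ⊆ gen F p) :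
    (Lbulk p η Γ).card = Γ.card * Fintype.card F * (Dset F p).card := by
  unfold Lbulk
  rw [Finset.card_image_of_injOn (fun z hz z' hz' h =>
    Tline_injOn hp hfa hpp hη hΓ hz hz' h), Finset.card_product, Cpts_card]

lemma Dset_card_low (hp : 0 < p) :
    Fintype.card F - (p + 1) ≤ (Dset F p).card := by
  have hsplit := Finset.card_filter_add_card_filter_not
    (s := (Finset.univ : Finset F)) (p := fun d1 : F => d1 ^ (p + 1) = -1)
  have hle := card_pow_eq_le (F := F) (p + 1) (by omega) (-1)
  have : (Dset F p) = Finset.univ.filter fun d1 : F => ¬(d1 ^ (p + 1) = -1) := rfl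
  rw [this]
  rw [Finset.card_univ] at hsplit
  omega

lemma Lcov_Lbulk_disjoint (hp : 0 < p) (hfa : ∀ x y : F, (x + y) ^ p = x ^ p + y ^ p)
    (hpp : ∀ x : F, (x ^ p) ^ p = x) (hη : η ^ (p + 1) = -1) (hΓ : Γ ⊆ gen F p) :
    Disjoint (Lcov p η Γ) (Lbulk p η Γ) := by
  rw [Finset.disjoint_left]
  intro ℓ hcov hbulk
  simp only [Lcov, Finset.mem_image] at hcov
  obtain ⟨y, _, rfl⟩ := hcov
  simp only [Lbulk, Finset.mem_image, Prod.exists] at hbulk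
  obtain ⟨a, d1, hz, heq⟩ := hbulk
  rw [Finset.mem_product] at hz
  have hga : gf p a = 0 := gf_Cpts hp hfa hpp hη hΓ hz.1
  have hd1 : d1 ^ (p + 1) ≠ -1 := by
    have := hz.2; simpa [Dset] using this
  by_cases hy : y ∈ gen F p
  · -- the whole line is in H; two points map to a
    simp only [gen, Finset.mem_filter] at hy
    have hg0 : ∀ t : F, gf p (ptP p η y t) = 0 := by
      intro t
      rw [gf_ptP p η hp hfa hpp hη, hy.2]
      ring
    have hmem : ∀ t : F, ptP p η y t ∈ Tline p a d1 := by
      intro t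
      rw [heq]; exact ⟨t, rfl⟩
    have e0 : ptP p η y 0 = a :=
      tline_inter p hp hfa hpp hga hd1 (hmem 0) (hg0 0)
    have e1 : ptP p η y 1 = a :=
      tline_inter p hp hfa hpp hga hd1 (hmem 1) (hg0 1)
    have : (0 : F) = 1 := by
      have := congrFun (e0.trans e1.symm) 1
      simpa [ptP, v3_1] using this
    simp at this
  · -- the line misses H, but a is on it with gf a = 0
    have ha : a ∈ Lline p η y := by
      rw [← heq]; exact self_mem_Tline p a d1
    obtain ⟨t, rfl⟩ := ha
    rw [gf_ptP p η hp hfa hpp hη] at hga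
    apply hy
    simp only [gen, Finset.mem_filter]
    exact ⟨Finset.mem_product.mpr ⟨Finset.mem_univ _, Finset.mem_univ _⟩,
      by linear_combination hga⟩

lemma Lfin_lines (ℓ : Set (Fin 3 → F)) (hl : ℓ ∈ Lfin p η Γ) : IsLine ℓ := by
  rw [Lfin, Finset.mem_union] at hl
  rcases hl with h | h
  · simp only [Lcov, Finset.mem_image] at h
    obtain ⟨y, _, rfl⟩ := h
    exact isline_Lline p η y
  · simp only [Lbulk, Finset.mem_image, Prod.exists] at h
    obtain ⟨a, d1, _, rfl⟩ := h
    exact isline_Tline p a d1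

lemma covered_iff (hp : 0 < p) (hfa : ∀ x y : F, (x + y) ^ p = x ^ p + y ^ p)
    (hpp : ∀ x : F, (x ^ p) ^ p = x) (hη : η ^ (p + 1) = -1) (hΓ : Γ ⊆ gen F p)
    (x : Fin 3 → F) :
    (∃ ℓ ∈ Lfin p η Γ, x ∈ ℓ) ↔ yof p η x ∈ Ycov p Γ := by
  constructor
  · rintro ⟨ℓ, hl, hxl⟩
    rw [Lfin, Finset.mem_union] at hl
    rcases hl with h | h
    · simp only [Lcov, Finset.mem_image] at h
      obtain ⟨y, hy, rfl⟩ := h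
      rwa [(mem_Lline_iff p η).mp hxl] at hy
    · by_contra hnc
      simp only [Ycov, Finset.mem_sdiff, Finset.mem_product, Finset.mem_univ, true_and,
        Finset.mem_sdiff, not_and, not_not] at hnc
      have hyg : yof p η x ∈ gen F p \ Γ := by
        rw [Finset.mem_sdiff]
        push_neg at hnc
        exact hnc
      rw [Finset.mem_sdiff] at hyg
      simp only [Lbulk, Finset.mem_image, Prod.exists] at h
      obtain ⟨a, d1, hz, rfl⟩ := h
      rw [Finset.mem_product] at hz
      have hgx : gf p x = 0 := by
        have hx := self_mem_Lline p η x
        obtain ⟨t, hxt⟩ := hx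
        rw [hxt, gf_ptP p η hp hfa hpp hη]
        have := hyg.1
        simp only [gen, Finset.mem_filter] at this
        rw [this.2]
        ring
      have hd1 : d1 ^ (p + 1) ≠ -1 := by
        have := hz.2; simpa [Dset] using this
      have hxa : x = a :=
        tline_inter p hp hfa hpp (gf_Cpts hp hfa hpp hη hΓ hz.1) hd1 hxl hgx
      exact hyg.2 (hxa ▸ yof_Cpts hz.1)
  · intro hy
    refine ⟨Lline p η (yof p η x), ?_, self_mem_Lline p η x⟩
    rw [Lfin, Finset.mem_union]
    left
    exact Finset.mem_image_of_mem _ hy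

lemma covered_card (hp : 0 < p) (hfa : ∀ x y : F, (x + y) ^ p = x ^ p + y ^ p)
    (hpp : ∀ x : F, (x ^ p) ^ p = x) (hη : η ^ (p + 1) = -1) (hΓ : Γ ⊆ gen F p) :
    (Finset.univ.filter fun x : Fin 3 → F => ∃ ℓ ∈ Lfin p η Γ, x ∈ ℓ).card
      = (Ycov p Γ).card * Fintype.card F := by
  have hiff : (Finset.univ.filter fun x : Fin 3 → F => ∃ ℓ ∈ Lfin p η Γ, x ∈ ℓ)
      = (Finset.univ.filter fun x : Fin 3 → F => yof p η x ∈ Ycov p Γ) := by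
    ext x
    simp only [Finset.mem_filter, Finset.mem_univ, true_and]
    exact covered_iff hp hfa hpp hη hΓ x
  rw [hiff, ← Finset.card_univ, ← Finset.card_product]
  apply Finset.card_bij (fun x _ => (yof p η x, x 1))
  · intro x hx
    simp only [Finset.mem_filter, Finset.mem_univ, true_and] at hx
    rw [Finset.mem_product]
    exact ⟨hx, Finset.mem_univ _⟩
  · intro x hx x' hx' h
    have h1 : yof p η x = yof p η x' := congrArg Prod.fst h
    have h2 : x 1 = x' 1 := congrArg Prod.snd h
    obtain ⟨t, ht⟩ := self_mem_Lline p η x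
    obtain ⟨t', ht'⟩ := self_mem_Lline p η x'
    have htx : t = x 1 := by rw [ht]; rfl
    have htx' : t' = x' 1 := by rw [ht']; rfl
    rw [ht, ht', h1, htx, htx', h2]
  · intro z hz
    rw [Finset.mem_product] at hz
    refine ⟨ptP p η z.1 z.2, ?_, ?_⟩
    · simp only [Finset.mem_filter, Finset.mem_univ, true_and]
      have : ptP p η z.1 z.2 ∈ Lline p η z.1 := ⟨z.2, rfl⟩
      rw [← (mem_Lline_iff p η).mp this]
      exact hz.1
    · have : ptP p η z.1 z.2 ∈ Lline p η z.1 := ⟨z.2, rfl⟩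
      rw [← (mem_Lline_iff p η).mp this]
      simp [ptP, v3_1]

lemma Ycov_card (hΓ : Γ ⊆ gen F p) :
    (Ycov p Γ).card = Fintype.card F * Fintype.card F - ((gen F p).card - Γ.card) := by
  unfold Ycov
  rw [Finset.card_sdiff_of_subset, Finset.card_sdiff_of_subset hΓ, Finset.card_product, Finset.card_univ]
  intro y _
  rw [Finset.mem_product]
  exact ⟨Finset.mem_univ _, Finset.mem_univ _⟩

end Construction

section Plane

variable (p : ℕ)

/-- the linear functional defining a "tangent plane" -/
def lam (c0 c1 : F) (w : Fin 3 → F) : F := w 2 - c0 * w 0 - c1 * w 1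

/-- the affine tangent plane at `b` -/
def TPset (b : Fin 3 → F) : Set (Fin 3 → F) :=
  {x | lam ((b 0) ^ p) ((b 1) ^ p) x = lam ((b 0) ^ p) ((b 1) ^ p) b}

variable {p}

variable {a u v : Fin 3 → F}

lemma diff_span {x y : Fin 3 → F} (hx : x ∈ affPlane a u v) (hy : y ∈ affPlane a u v) :
    ∃ σ τ : F, y - x = σ • u + τ • v := by
  obtain ⟨s1, t1, rfl⟩ := hx
  obtain ⟨s2, t2, rfl⟩ := hy
  exact ⟨s2 - s1, t2 - t1, by module⟩

lemma affPlane_closed {x y : Fin 3 → F} (hx : x ∈ affPlane a u v) (hy : y ∈ affPlane a u v)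
    (c : F) : x + c • (y - x) ∈ affPlane a u v := by
  obtain ⟨s1, t1, rfl⟩ := hx
  obtain ⟨s2, t2, rfl⟩ := hy
  exact ⟨s1 + c * (s2 - s1), t1 + c * (t2 - t1), by module⟩

lemma lam_comb (c0 c1 σ τ : F) :
    lam c0 c1 (σ • u + τ • v) = σ * lam c0 c1 u + τ * lam c0 c1 v := by
  simp only [lam, Pi.add_apply, Pi.smul_apply, smul_eq_mul]
  ring

lemma lam_plane_pt (c0 c1 s t : F) :
    lam c0 c1 (a + s • u + t • v) = lam c0 c1 a + s * lam c0 c1 u + t * lam c0 c1 v := by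
  simp only [lam, Pi.add_apply, Pi.smul_apply, smul_eq_mul]
  ring

/-- If two distinct "normalized" directions of the plane kill `lam`, then `lam` is
constant on the plane. -/
lemma lam_const_on_plane (c0 c1 : F) {x d d' : Fin 3 → F}
    (hx : x ∈ affPlane a u v) (hxd : x + d ∈ affPlane a u v)
    (hxd' : x + d' ∈ affPlane a u v)
    (hdone : d 1 = 1) (hd'one : d' 1 = 1) (hne : d 0 ≠ d' 0)
    (hld : lam c0 c1 d = 0) (hld' : lam c0 c1 d' = 0) :
    ∀ w ∈ affPlane a u v, lam c0 c1 w = lam c0 c1 a := by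
  obtain ⟨σ, τ, hστ⟩ := diff_span hx hxd
  obtain ⟨σ', τ', hστ'⟩ := diff_span hx hxd'
  rw [add_sub_cancel_left] at hστ hστ'
  have hA1 : σ * lam c0 c1 u + τ * lam c0 c1 v = 0 := by
    rw [← lam_comb, ← hστ]; exact hld
  have hA2 : σ' * lam c0 c1 u + τ' * lam c0 c1 v = 0 := by
    rw [← lam_comb, ← hστ']; exact hld'
  by_cases hdet : σ * τ' - σ' * τ = 0
  · exfalso
    have h1 : τ' • d - τ • d' = (τ' * σ - τ * σ') • u + (τ' * τ - τ * τ') • v := by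
      rw [hστ, hστ']; module
    have e1 : τ' * σ - τ * σ' = 0 := by linear_combination hdet
    have e2 : τ' * τ - τ * τ' = 0 := by ring
    rw [e1, e2, zero_smul, zero_smul, add_zero] at h1
    have hτ : τ' = τ := by
      have := congrFun h1 1
      simp only [Pi.sub_apply, Pi.smul_apply, Pi.zero_apply, smul_eq_mul, hdone, hd'one] at this
      linear_combination this
    have h2 : σ' • d - σ • d' = (σ' * σ - σ * σ') • u + (σ' * τ - σ * τ') • v := by
      rw [hστ, hστ']; module
    have f1 : σ' * σ - σ * σ' = 0 := by ring
    have f2 : σ' * τ - σ * τ' = 0 := by linear_combination -hdet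
    rw [f1, f2, zero_smul, zero_smul, add_zero] at h2
    have hσ : σ' = σ := by
      have := congrFun h2 1
      simp only [Pi.sub_apply, Pi.smul_apply, Pi.zero_apply, smul_eq_mul, hdone, hd'one] at this
      linear_combination this
    have hdd : d = d' := by rw [hστ, hστ', hσ, hτ]
    exact hne (by rw [hdd])
  · have hA : lam c0 c1 u = 0 := by
      have h := mul_eq_zero.mp (show lam c0 c1 u * (σ * τ' - σ' * τ) = 0 by
        linear_combination τ' * hA1 - τ * hA2)
      tauto
    have hB : lam c0 c1 v = 0 := by
      have h := mul_eq_zero.mp (show lam c0 c1 v * (σ * τ' - σ' * τ) = 0 by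
        linear_combination -σ' * hA1 + σ * hA2)
      tauto
    intro w hw
    obtain ⟨s, t, rfl⟩ := hw
    rw [lam_plane_pt, hA, hB]
    ring


lemma plane_card_le :
    (Finset.univ.filter (fun x : Fin 3 → F => x ∈ affPlane a u v)).card
      ≤ Fintype.card F * Fintype.card F := by
  rw [← Finset.card_univ, ← Finset.card_product]
  apply Finset.card_le_card_of_surjOn (fun z : F × F => a + z.1 • u + z.2 • v)
  intro x hx
  simp only [Finset.coe_filter, Finset.mem_univ, true_and, Set.mem_setOf_eq] at hx
  obtain ⟨s, t, rfl⟩ := hx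
  exact ⟨(s, t), by simp, rfl⟩

lemma plane_card_eq (hli : LinearIndependent F ![u, v]) :
    (Finset.univ.filter (fun x : Fin 3 → F => x ∈ affPlane a u v)).card
      = Fintype.card F * Fintype.card F := by
  rw [← Finset.card_univ, ← Finset.card_product]
  apply (Finset.card_bij (fun (z : F × F) _ => a + z.1 • u + z.2 • v) ?_ ?_ ?_).symm
  · intro z _
    simp only [Finset.mem_filter, Finset.mem_univ, true_and]
    exact ⟨z.1, z.2, rfl⟩
  · intro z _ z' _ h
    have hz : (z.1 - z'.1) • u + (z.2 - z'.2) • v = 0 := by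
      have hd : (z.1 - z'.1) • u + (z.2 - z'.2) • v
          = (a + z.1 • u + z.2 • v) - (a + z'.1 • u + z'.2 • v) := by module
      rw [hd, h, sub_self]
    obtain ⟨e1, e2⟩ := LinearIndependent.pair_iff.mp hli _ _ hz
    exact Prod.ext (sub_eq_zero.mp e1) (sub_eq_zero.mp e2)
  · intro x hx
    simp only [Finset.mem_filter, Finset.mem_univ, true_and] at hx
    obtain ⟨s, t, rfl⟩ := hx
    exact ⟨(s, t), Finset.mem_product.mpr ⟨Finset.mem_univ _, Finset.mem_univ _⟩, rfl⟩

lemma TP_card (b : Fin 3 → F) :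
    (Finset.univ.filter (fun x : Fin 3 → F => x ∈ TPset p b)).card
      = Fintype.card F * Fintype.card F := by
  rw [← Finset.card_univ, ← Finset.card_product]
  apply (Finset.card_bij (fun (z : F × F) _ =>
    (![z.1, z.2, lam ((b 0) ^ p) ((b 1) ^ p) b + (b 0) ^ p * z.1 + (b 1) ^ p * z.2]
      : Fin 3 → F)) ?_ ?_ ?_).symm
  · intro z _
    simp only [Finset.mem_filter, Finset.mem_univ, true_and, TPset, Set.mem_setOf_eq]
    simp only [lam, v3_0, v3_1, v3_2]
    ring
  · intro z _ z' _ h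
    have h0 := congrFun h 0
    have h1 := congrFun h 1
    simp only [v3_0, v3_1] at h0 h1
    exact Prod.ext h0 h1
  · intro x hx
    simp only [Finset.mem_filter, Finset.mem_univ, true_and, TPset, Set.mem_setOf_eq] at hx
    refine ⟨(x 0, x 1), Finset.mem_product.mpr ⟨Finset.mem_univ _, Finset.mem_univ _⟩, ?_⟩
    simp only [lam] at hx
    dsimp only
    apply eq3
    · rw [v3_0]
    · rw [v3_1]
    · rw [v3_2]
      simp only [lam]
      linear_combination -hx

lemma P_eq_TP (hli : LinearIndependent F ![u, v]) {b : Fin 3 → F}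
    (hsub : ∀ w ∈ affPlane a u v, w ∈ TPset p b) :
    (Finset.univ.filter (fun x : Fin 3 → F => x ∈ affPlane a u v))
      = (Finset.univ.filter (fun x : Fin 3 → F => x ∈ TPset p b)) := by
  apply Finset.eq_of_subset_of_card_le
  · intro x hx
    rw [Finset.mem_filter] at hx ⊢
    exact ⟨hx.1, hsub x hx.2⟩
  · rw [TP_card, plane_card_eq hli]

lemma TP_inj (hpp : ∀ x : F, (x ^ p) ^ p = x) {b b' : Fin 3 → F}
    (h : (Finset.univ.filter (fun x : Fin 3 → F => x ∈ TPset p b))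
      = (Finset.univ.filter (fun x : Fin 3 → F => x ∈ TPset p b'))) : b = b' := by
  have hm : ∀ x : Fin 3 → F,
      (x 2 - (b 0) ^ p * x 0 - (b 1) ^ p * x 1
        = b 2 - (b 0) ^ p * b 0 - (b 1) ^ p * b 1) →
      (x 2 - (b' 0) ^ p * x 0 - (b' 1) ^ p * x 1
        = b' 2 - (b' 0) ^ p * b' 0 - (b' 1) ^ p * b' 1) := by
    intro x hx
    have h1 : x ∈ Finset.univ.filter (fun x : Fin 3 → F => x ∈ TPset p b) := by
      simp only [Finset.mem_filter, Finset.mem_univ, true_and, TPset, Set.mem_setOf_eq, lam]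
      exact hx
    rw [h] at h1
    simp only [Finset.mem_filter, Finset.mem_univ, true_and, TPset, Set.mem_setOf_eq, lam] at h1
    exact h1
  have h0 := hm ![0, 0, b 2 - (b 0) ^ p * b 0 - (b 1) ^ p * b 1]
    (by simp only [v3_0, v3_1, v3_2]; ring)
  simp only [v3_0, v3_1, v3_2] at h0
  have h1 := hm ![1, 0, b 2 - (b 0) ^ p * b 0 - (b 1) ^ p * b 1 + (b 0) ^ p]
    (by simp only [v3_0, v3_1, v3_2]; ring)
  simp only [v3_0, v3_1, v3_2] at h1
  have h2 := hm ![0, 1, b 2 - (b 0) ^ p * b 0 - (b 1) ^ p * b 1 + (b 1) ^ p]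
    (by simp only [v3_0, v3_1, v3_2]; ring)
  simp only [v3_0, v3_1, v3_2] at h2
  have hb0p : (b 0) ^ p = (b' 0) ^ p := by linear_combination h1 - h0
  have hb1p : (b 1) ^ p = (b' 1) ^ p := by linear_combination h2 - h0
  have hb0 : b 0 = b' 0 := by
    calc b 0 = ((b 0) ^ p) ^ p := (hpp _).symm
      _ = ((b' 0) ^ p) ^ p := by rw [hb0p]
      _ = b' 0 := hpp _
  have hb1 : b 1 = b' 1 := by
    calc b 1 = ((b 1) ^ p) ^ p := (hpp _).symm
      _ = ((b' 1) ^ p) ^ p := by rw [hb1p]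
      _ = b' 1 := hpp _
  have hb2 : b 2 = b' 2 := by
    rw [hb0, hb1] at h0
    linear_combination h0
  exact eq3 b b' hb0 hb1 hb2


lemma lam_tdir (p : ℕ) (b : Fin 3 → F) (d1 : F) :
    lam ((b 0) ^ p) ((b 1) ^ p) (tdir p b d1) = 0 := by
  simp only [lam, tdir, v3_0, v3_1, v3_2]
  ring

lemma Lline_sub {p : ℕ} {η : F} {y : F × F} {x x' : Fin 3 → F}
    (hx : x ∈ Lline p η y) (hx' : x' ∈ Lline p η y) (hne : x ≠ x')
    (hxP : x ∈ affPlane a u v) (hx'P : x' ∈ affPlane a u v) :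
    Lline p η y ⊆ affPlane a u v := by
  obtain ⟨t, rfl⟩ := hx
  obtain ⟨t', rfl⟩ := hx'
  have htt : t' - t ≠ 0 := by
    intro h
    apply hne
    have : t = t' := by linear_combination -h
    rw [this]
  intro w hw
  obtain ⟨s, rfl⟩ := hw
  have hkey : ptP p η y s
      = ptP p η y t + ((s - t)/(t' - t)) • (ptP p η y t' - ptP p η y t) := by
    apply eq3 <;>
      simp only [ptP, v3_0, v3_1, v3_2, Pi.add_apply, Pi.sub_apply, Pi.smul_apply,
        smul_eq_mul] <;>
      field_simp <;> ring
  rw [hkey]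
  exact affPlane_closed hxP hx'P _

lemma cov_plane {p : ℕ} {η : F} {Γ : Finset (F × F)} :
    ((Lcov p η Γ).filter (fun ℓ => ℓ ⊆ affPlane a u v)).card ≤ Fintype.card F := by
  classical
  have h1 : ((Lcov p η Γ).filter (fun ℓ => ℓ ⊆ affPlane a u v)).card
      ≤ ((Ycov p Γ).filter (fun y => Lline p η y ⊆ affPlane a u v)).card := by
    rw [Lcov, Finset.filter_image]
    exact Finset.card_image_le
  have h2 : ((Ycov p Γ).filter (fun y => Lline p η y ⊆ affPlane a u v)).card * Fintype.card F
      ≤ Fintype.card F * Fintype.card F := by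
    calc ((Ycov p Γ).filter (fun y => Lline p η y ⊆ affPlane a u v)).card * Fintype.card F
        = (((Ycov p Γ).filter (fun y => Lline p η y ⊆ affPlane a u v)) ×ˢ
            (Finset.univ : Finset F)).card := by
          rw [Finset.card_product, Finset.card_univ]
      _ ≤ (Finset.univ.filter (fun x : Fin 3 → F => x ∈ affPlane a u v)).card := by
          apply Finset.card_le_card_of_injOn (fun z => ptP p η z.1 z.2)
          · intro z hz
            rw [Finset.mem_coe, Finset.mem_product, Finset.mem_filter] at hz
            simp only [Finset.mem_coe, Finset.mem_filter, Finset.mem_univ, true_and]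
            exact hz.1.2 ⟨z.2, rfl⟩
          · intro z _ z' _ h
            exact ptP_injOn z z' h
      _ ≤ Fintype.card F * Fintype.card F := plane_card_le
  have hq : 0 < Fintype.card F := Fintype.card_pos
  exact h1.trans (Nat.le_of_mul_le_mul_right h2 hq)

lemma bulk_plane {p : ℕ} {η : F} {Γ : Finset (F × F)} (hp : 0 < p)
    (hfa : ∀ x y : F, (x + y) ^ p = x ^ p + y ^ p)
    (hpp : ∀ x : F, (x ^ p) ^ p = x) (hη : η ^ (p + 1) = -1) (hΓ : Γ ⊆ gen F p)
    (hli : LinearIndependent F ![u, v]) :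
    ((Lbulk p η Γ).filter (fun ℓ => ℓ ⊆ affPlane a u v)).card
      ≤ Γ.card + Fintype.card F := by
  classical
  set IDX := ((Cpts p η Γ) ×ˢ (Dset F p)).filter
    (fun z => Tline p z.1 z.2 ⊆ affPlane a u v) with hIDX
  set n : (Fin 3 → F) → ℕ := fun b => (IDX.filter (fun z => z.1 = b)).card with hn
  set TPeq : (Fin 3 → F) → Prop := fun b =>
    (Finset.univ.filter (fun x : Fin 3 → F => x ∈ affPlane a u v))
      = (Finset.univ.filter (fun x : Fin 3 → F => x ∈ TPset p b)) with hTPeq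
  have hcard1 : ((Lbulk p η Γ).filter (fun ℓ => ℓ ⊆ affPlane a u v)).card ≤ IDX.card := by
    rw [Lbulk, Finset.filter_image]
    exact Finset.card_image_le
  have hfw : IDX.card = ∑ b ∈ Cpts p η Γ, n b :=
    Finset.card_eq_sum_card_fiberwise (fun z hz => by
      rw [hIDX, Finset.mem_coe, Finset.mem_filter, Finset.mem_product] at hz
      exact hz.1.1)
  have hIDXmem : ∀ z ∈ IDX, z.1 ∈ Cpts p η Γ ∧ z.2 ∈ Dset F p ∧
      Tline p z.1 z.2 ⊆ affPlane a u v := by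
    intro z hz
    rw [hIDX, Finset.mem_filter, Finset.mem_product] at hz
    exact ⟨hz.1.1, hz.1.2, hz.2⟩
  have hnle : ∀ b : Fin 3 → F, n b ≤ Fintype.card F := by
    intro b
    rw [hn, ← Finset.card_univ]
    apply Finset.card_le_card_of_injOn (fun z => z.2)
    · intro z _; exact Finset.mem_univ _
    · intro z hz z' hz' h
      rw [Finset.mem_coe, Finset.mem_filter] at hz hz'
      exact Prod.ext (hz.2.trans hz'.2.symm) h
  have hbP : ∀ b : Fin 3 → F, 1 ≤ n b →
      b ∈ affPlane a u v ∧ ∃ d1, d1 ∈ Dset F p ∧ Tline p b d1 ⊆ affPlane a u v := by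
    intro b h1
    rw [hn] at h1
    obtain ⟨z, hz⟩ := Finset.card_pos.mp h1
    rw [Finset.mem_filter] at hz
    obtain ⟨hzI, hz1⟩ := hz
    obtain ⟨hc, hd, hsub⟩ := hIDXmem z hzI
    rw [hz1] at hsub
    exact ⟨hsub (self_mem_Tline p b z.2), z.2, hd, hsub⟩
  have key1 : ∀ b ∈ Cpts p η Γ, 2 ≤ n b → TPeq b := by
    intro b _ h2
    rw [hn] at h2
    obtain ⟨z, z', hz, hz', hne⟩ := Finset.one_lt_card_iff.mp h2
    rw [Finset.mem_filter] at hz hz'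
    obtain ⟨hzI, hz1⟩ := hz
    obtain ⟨hz'I, hz'1⟩ := hz'
    obtain ⟨hcz, hdz, hsubz⟩ := hIDXmem z hzI
    obtain ⟨hcz', hdz', hsubz'⟩ := hIDXmem z' hz'I
    rw [hz1] at hsubz
    rw [hz'1] at hsubz'
    have hd1ne : z.2 ≠ z'.2 := by
      intro h
      exact hne (Prod.ext (hz1.trans hz'1.symm) h)
    have hxP : b ∈ affPlane a u v := hsubz (self_mem_Tline p b z.2)
    have hxdP : b + tdir p b z.2 ∈ affPlane a u v := by
      have := hsubz (snd_mem_Tline p b z.2)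
      rwa [one_smul] at this
    have hxd'P : b + tdir p b z'.2 ∈ affPlane a u v := by
      have := hsubz' (snd_mem_Tline p b z'.2)
      rwa [one_smul] at this
    have hconst := lam_const_on_plane ((b 0) ^ p) ((b 1) ^ p) hxP hxdP hxd'P
      (rfl) (rfl) hd1ne (lam_tdir p b z.2) (lam_tdir p b z'.2)
    rw [hTPeq]
    apply P_eq_TP hli
    intro w hw
    have h1 := hconst w hw
    have h2 := hconst b hxP
    simp only [TPset, Set.mem_setOf_eq]
    rw [h1, h2]
  have key2 : ∀ b ∈ Cpts p η Γ, 1 ≤ n b →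
      Lline p η (yof p η b) ⊆ affPlane a u v → TPeq b := by
    intro b _ h1 hLsub
    obtain ⟨hxP, d1, hd1D, hsub⟩ := hbP b h1
    have hd1 : d1 ^ (p + 1) ≠ -1 := by
      simpa [Dset] using hd1D
    obtain ⟨t, hbt⟩ := self_mem_Lline p η b
    have hbgd : b + ![η, 1, η * (yof p η b).1 ^ p] = ptP p η (yof p η b) (t + 1) := by
      have hyy : yof p η (ptP p η (yof p η b) t) = yof p η b :=
        ((mem_Lline_iff p η).mp ⟨t, rfl⟩).symm
      conv_lhs => rw [hbt]
      rw [hyy]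
      apply eq3 <;>
        simp only [ptP, v3_0, v3_1, v3_2, Pi.add_apply] <;> ring
    have hxdP : b + tdir p b d1 ∈ affPlane a u v := by
      have := hsub (snd_mem_Tline p b d1)
      rwa [one_smul] at this
    have hxd'P : b + ![η, 1, η * (yof p η b).1 ^ p] ∈ affPlane a u v := by
      rw [hbgd]
      exact hLsub ⟨t + 1, rfl⟩
    have hgd0 : tdir p b d1 0 ≠ (![η, 1, η * (yof p η b).1 ^ p] : Fin 3 → F) 0 := by
      show d1 ≠ η
      intro h
      rw [h] at hd1
      exact hd1 hη
    have hlamgd : lam ((b 0) ^ p) ((b 1) ^ p) (![η, 1, η * (yof p η b).1 ^ p]) = 0 := by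
      simp only [lam, v3_0, v3_1, v3_2]
      have hy1 : (yof p η b).1 = b 0 - η * b 1 := rfl
      rw [hy1, hsub_of p hp hfa, mul_pow]
      have e : η ^ p * η = -1 := by rw [← pow_succ]; exact hη
      linear_combination (-((b 1) ^ p)) * e
    have hconst := lam_const_on_plane ((b 0) ^ p) ((b 1) ^ p) hxP hxdP hxd'P
      (rfl) (rfl) hgd0 (lam_tdir p b d1) hlamgd
    rw [hTPeq]
    apply P_eq_TP hli
    intro w hw
    have h1 := hconst w hw
    have h2 := hconst b hxP
    simp only [TPset, Set.mem_setOf_eq]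
    rw [h1, h2]
  have keyT : ((Cpts p η Γ).filter TPeq).card ≤ 1 := by
    apply Finset.card_le_one.mpr
    intro b hb b' hb'
    rw [Finset.mem_filter] at hb hb'
    rw [hTPeq] at hb hb'
    exact TP_inj hpp (hb.2.symm.trans hb'.2)
  have hS1 : (((Cpts p η Γ).filter (fun b => ¬ TPeq b)).filter (fun b => 1 ≤ n b)).card
      ≤ Γ.card := by
    apply Finset.card_le_card_of_injOn (yof p η)
    · intro b hb
      simp only [Finset.mem_coe, Finset.mem_filter] at hb
      exact yof_Cpts hb.1.1
    · intro b hb b' hb' heq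
      by_contra hbb
      simp only [Finset.mem_coe, Finset.mem_filter] at hb hb'
      obtain ⟨⟨hbC, hbT⟩, hb1⟩ := hb
      obtain ⟨⟨hb'C, _⟩, hb'1⟩ := hb'
      have hbmem : b ∈ Lline p η (yof p η b) := self_mem_Lline p η b
      have hb'mem : b' ∈ Lline p η (yof p η b) := by
        rw [heq]
        exact self_mem_Lline p η b'
      have hbinP := (hbP b hb1).1
      have hb'inP := (hbP b' hb'1).1
      have hLsub := Lline_sub hbmem hb'mem hbb hbinP hb'inP
      exact hbT (key2 b hbC hb1 hLsub)
  have hboundTP : ∑ b ∈ (Cpts p η Γ).filter TPeq, n b ≤ Fintype.card F := by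
    have step1 : ∑ b ∈ (Cpts p η Γ).filter TPeq, n b
        ≤ ∑ _b ∈ (Cpts p η Γ).filter TPeq, Fintype.card F :=
      Finset.sum_le_sum (fun b _ => hnle b)
    rw [Finset.sum_const, smul_eq_mul] at step1
    calc ∑ b ∈ (Cpts p η Γ).filter TPeq, n b
        ≤ ((Cpts p η Γ).filter TPeq).card * Fintype.card F := step1
      _ ≤ 1 * Fintype.card F := Nat.mul_le_mul_right _ keyT
      _ = Fintype.card F := one_mul _
  have hboundNT : ∑ b ∈ (Cpts p η Γ).filter (fun b => ¬ TPeq b), n b ≤ Γ.card := by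
    refine le_trans ?_ hS1
    rw [← Finset.sum_filter_add_sum_filter_not
      ((Cpts p η Γ).filter (fun b => ¬ TPeq b)) (fun b => 1 ≤ n b) n]
    have hz2 : ∑ b ∈ ((Cpts p η Γ).filter (fun b => ¬ TPeq b)).filter
        (fun b => ¬(1 ≤ n b)), n b = 0 := by
      apply Finset.sum_eq_zero
      intro b hb
      rw [Finset.mem_filter] at hb
      omega
    rw [hz2, add_zero]
    have hone : ∀ b ∈ ((Cpts p η Γ).filter (fun b => ¬ TPeq b)).filter
        (fun b => 1 ≤ n b), n b ≤ 1 := by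
      intro b hb
      rw [Finset.mem_filter, Finset.mem_filter] at hb
      by_contra hc
      push_neg at hc
      exact hb.1.2 (key1 b hb.1.1 hc)
    calc ∑ b ∈ ((Cpts p η Γ).filter (fun b => ¬ TPeq b)).filter (fun b => 1 ≤ n b), n b
        ≤ ∑ _b ∈ ((Cpts p η Γ).filter (fun b => ¬ TPeq b)).filter (fun b => 1 ≤ n b), 1 :=
          Finset.sum_le_sum hone
      _ = _ := by rw [Finset.sum_const, smul_eq_mul, mul_one]
  calc ((Lbulk p η Γ).filter (fun ℓ => ℓ ⊆ affPlane a u v)).card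
      ≤ IDX.card := hcard1
    _ = ∑ b ∈ Cpts p η Γ, n b := hfw
    _ = ∑ b ∈ (Cpts p η Γ).filter TPeq, n b
        + ∑ b ∈ (Cpts p η Γ).filter (fun b => ¬ TPeq b), n b :=
        (Finset.sum_filter_add_sum_filter_not _ _ _).symm
    _ ≤ Fintype.card F + Γ.card := Nat.add_le_add hboundTP hboundNT
    _ = Γ.card + Fintype.card F := Nat.add_comm _ _

end Plane

end S19

open S19 Finset in
/-- For `q = p^2` and `0 < α < 1`, there is a set of `(α+o(1)) q^{7/2}` lines in
`F_q^3`, no plane containing more than `(α+o(1)) q^{3/2}` of them, whose union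
has exactly `q^3 - (1-α+o(1)) q^{5/2}` points. -/
theorem stmt_19 (α : ℝ) (hα0 : 0 < α) (hα1 : α < 1) :
    ∀ ε : ℝ, 0 < ε → ∃ Q : ℕ, ∀ p : ℕ, Q < p →
    (∃ r k : ℕ, Nat.Prime r ∧ 0 < k ∧ p = r ^ k) →
    ∀ (F : Type) [Field F] [Fintype F], Fintype.card F = p ^ 2 →
    ∃ L : Finset (Set (Fin 3 → F)),
      (∀ ℓ ∈ L, IsLine ℓ) ∧
      |(L.card : ℝ) - α * (p : ℝ) ^ 7| ≤ ε * (p : ℝ) ^ 7 ∧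
      (∀ a u v : Fin 3 → F, LinearIndependent F ![u, v] →
        ((L.filter (fun ℓ => ℓ ⊆ affPlane a u v)).card : ℝ) ≤ (α + ε) * (p : ℝ) ^ 3) ∧
      |((Finset.univ.filter (fun x : Fin 3 → F => ∃ ℓ ∈ L, x ∈ ℓ)).card : ℝ)
          - ((p : ℝ) ^ 6 - (1 - α) * (p : ℝ) ^ 5)| ≤ ε * (p : ℝ) ^ 5 := by
  intro ε hε
  refine ⟨⌈(3:ℝ)/ε⌉₊ + 3, ?_⟩
  intro p hQ hpk F _ _ hcard
  classical
  have hp2 : 2 ≤ p := by omega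
  have hp0 : 0 < p := by omega
  -- real bounds on p
  have hpr4 : (4:ℝ) ≤ (p:ℝ) := by
    have h4 : (4:ℕ) ≤ p := by omega
    exact_mod_cast h4
  have hpr1 : (1:ℝ) ≤ (p:ℝ) := by linarith
  have hpr0 : (0:ℝ) ≤ (p:ℝ) := by linarith
  have hεp : 3 ≤ ε * (p:ℝ) := by
    have h1 : (3:ℝ)/ε ≤ ⌈(3:ℝ)/ε⌉₊ := Nat.le_ceil _
    have h2 : (⌈(3:ℝ)/ε⌉₊ : ℝ) ≤ (p:ℝ) := by
      have hle : ⌈(3:ℝ)/ε⌉₊ ≤ p := by omega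
      exact_mod_cast hle
    have h3 : (3:ℝ)/ε ≤ (p:ℝ) := le_trans h1 h2
    calc (3:ℝ) = ((3:ℝ)/ε) * ε := by field_simp
      _ ≤ (p:ℝ) * ε := mul_le_mul_of_nonneg_right h3 (le_of_lt hε)
      _ = ε * (p:ℝ) := mul_comm _ _
  -- characteristic facts
  obtain ⟨r, k, hrp, hk0, hpe⟩ := hpk
  haveI : Fact r.Prime := ⟨hrp⟩
  have hcharF : CharP F r := by
    have hinst : CharP F (ringChar F) := ringChar.charP F
    have hcp : (ringChar F).Prime := CharP.char_is_prime F (ringChar F)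
    have hdvd : (ringChar F) ∣ Fintype.card F :=
      (CharP.cast_eq_zero_iff F (ringChar F) (Fintype.card F)).mp
        (FiniteField.cast_card_eq_zero F)
    rw [hcard, hpe, ← pow_mul] at hdvd
    have hre : ringChar F = r :=
      (Nat.prime_dvd_prime_iff_eq hcp hrp).mp (hcp.dvd_of_dvd_pow hdvd)
    rwa [hre] at hinst
  have hfa : ∀ x y : F, (x + y) ^ p = x ^ p + y ^ p := by
    intro x y
    rw [hpe]
    exact add_pow_char_pow (p := r) x y k
  have hpp := hpp_of (F := F) p hcard
  obtain ⟨η, hη⟩ := exists_eta p hp2 hcard hfa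
  have hgen := gen_card p hp2 hcard hfa
  set m := ⌊α * (p:ℝ) ^ 3⌋₊ with hm
  have hm1 : (m : ℝ) ≤ α * (p:ℝ) ^ 3 := Nat.floor_le (by positivity)
  have hm2 : α * (p:ℝ) ^ 3 ≤ (m : ℝ) + 1 := le_of_lt (Nat.lt_floor_add_one _)
  have hmp3 : m ≤ p ^ 2 * p := by
    have h1 : α * (p:ℝ) ^ 3 < (p:ℝ) ^ 3 := by
      have hp3 : (0:ℝ) < (p:ℝ) ^ 3 := by positivity
      nlinarith
    have h2 : (m:ℝ) < ((p ^ 2 * p : ℕ) : ℝ) := by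
      push_cast
      nlinarith
    exact le_of_lt (by exact_mod_cast h2)
  have hmle : m ≤ (gen F p).card := by rw [hgen]; exact hmp3
  obtain ⟨Γ, hΓsub, hΓcard⟩ := Finset.exists_subset_card_eq hmle
  refine ⟨Lfin p η Γ, fun ℓ hl => Lfin_lines ℓ hl, ?_, ?_, ?_⟩
  · -- total number of lines
    have hLsplit : (Lfin p η Γ).card = (Lcov p η Γ).card + (Lbulk p η Γ).card := by
      rw [Lfin]
      exact Finset.card_union_of_disjoint (Lcov_Lbulk_disjoint hp0 hfa hpp hη hΓsub)
    have hbulk : (Lbulk p η Γ).card = m * p ^ 2 * (Dset F p).card := by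
      rw [Lbulk_card hp0 hfa hpp hη hΓsub, hΓcard, hcard]
    have hDle : (Dset F p).card ≤ p ^ 2 := by
      calc (Dset F p).card ≤ (Finset.univ : Finset F).card := Finset.card_filter_le _ _
        _ = p ^ 2 := by rw [Finset.card_univ, hcard]
    have hDge : p ^ 2 - (p + 1) ≤ (Dset F p).card := by
      have := Dset_card_low (F := F) (p := p) hp0
      rwa [hcard] at this
    have hcovle : (Lcov p η Γ).card ≤ p ^ 2 * p ^ 2 := by
      calc (Lcov p η Γ).card ≤ (Ycov p Γ).card := Finset.card_image_le
        _ ≤ ((Finset.univ : Finset F) ×ˢ (Finset.univ : Finset F)).card :=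
            Finset.card_le_card Finset.sdiff_subset
        _ = p ^ 2 * p ^ 2 := by
            rw [Finset.card_product, Finset.card_univ, hcard]
    -- Nat bounds
    have hNup : (Lfin p η Γ).card ≤ p ^ 2 * p ^ 2 + m * p ^ 2 * p ^ 2 := by
      rw [hLsplit, hbulk]
      have : m * p ^ 2 * (Dset F p).card ≤ m * p ^ 2 * p ^ 2 :=
        Nat.mul_le_mul_left _ hDle
      omega
    have hNlow : m * p ^ 2 * (p ^ 2 - (p + 1)) ≤ (Lfin p η Γ).card := by
      rw [hLsplit, hbulk]
      have : m * p ^ 2 * (p ^ 2 - (p + 1)) ≤ m * p ^ 2 * (Dset F p).card :=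
        Nat.mul_le_mul_left _ hDge
      omega
    -- real bounds
    have hp1q : (p:ℕ) + 1 ≤ p ^ 2 := by nlinarith
    have hNupR : ((Lfin p η Γ).card : ℝ) ≤ (p:ℝ) ^ 4 + (m:ℝ) * (p:ℝ) ^ 4 := by
      have := (Nat.cast_le (α := ℝ)).mpr hNup
      push_cast at this
      calc ((Lfin p η Γ).card : ℝ) ≤ ((p:ℝ)^2 * (p:ℝ)^2 + (m:ℝ) * (p:ℝ)^2 * (p:ℝ)^2) := this
        _ = (p:ℝ) ^ 4 + (m:ℝ) * (p:ℝ) ^ 4 := by ring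
    have hNlowR : (m:ℝ) * (p:ℝ) ^ 2 * ((p:ℝ) ^ 2 - (p:ℝ) - 1) ≤ ((Lfin p η Γ).card : ℝ) := by
      have := (Nat.cast_le (α := ℝ)).mpr hNlow
      rw [Nat.cast_mul, Nat.cast_sub hp1q] at this
      push_cast at this
      calc (m:ℝ) * (p:ℝ) ^ 2 * ((p:ℝ) ^ 2 - (p:ℝ) - 1)
          = (m:ℝ) * (p:ℝ)^2 * ((p:ℝ)^2 - ((p:ℝ) + 1)) := by ring
        _ ≤ _ := this
    have hε7 : 3 * (p:ℝ) ^ 6 ≤ ε * (p:ℝ) ^ 7 := by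
      have h := mul_le_mul_of_nonneg_right hεp (pow_nonneg hpr0 6)
      calc 3 * (p:ℝ) ^ 6 ≤ (ε * (p:ℝ)) * (p:ℝ) ^ 6 := h
        _ = ε * (p:ℝ) ^ 7 := by ring
    have hmnn : (0:ℝ) ≤ (m:ℝ) := Nat.cast_nonneg _
    rw [abs_le]
    constructor
    · -- lower bound
      have hX : (0:ℝ) ≤ (p:ℝ) ^ 4 - (p:ℝ) ^ 3 - (p:ℝ) ^ 2 := by nlinarith
      have h1 : (α * (p:ℝ) ^ 3 - 1) * ((p:ℝ) ^ 4 - (p:ℝ) ^ 3 - (p:ℝ) ^ 2)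
          ≤ (m:ℝ) * ((p:ℝ) ^ 4 - (p:ℝ) ^ 3 - (p:ℝ) ^ 2) :=
        mul_le_mul_of_nonneg_right (by linarith) hX
      have h2 : (m:ℝ) * (p:ℝ) ^ 2 * ((p:ℝ) ^ 2 - (p:ℝ) - 1) = (m:ℝ) * ((p:ℝ)^4 - (p:ℝ)^3 - (p:ℝ)^2) := by ring
      have e1 : (p:ℝ) ^ 5 ≤ (p:ℝ) ^ 6 := pow_le_pow_right₀ hpr1 (by omega)
      have e2 : (p:ℝ) ^ 4 ≤ (p:ℝ) ^ 6 := pow_le_pow_right₀ hpr1 (by omega)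
      have e3 : (0:ℝ) ≤ (p:ℝ) ^ 3 := by positivity
      have e4 : (0:ℝ) ≤ (p:ℝ) ^ 2 := by positivity
      have e5 : α * (p:ℝ) ^ 6 ≤ (p:ℝ) ^ 6 := by nlinarith
      have e6 : α * (p:ℝ) ^ 5 ≤ (p:ℝ) ^ 5 := by
        have : (0:ℝ) ≤ (p:ℝ) ^ 5 := by positivity
        nlinarith
      nlinarith [hNlowR, h1, h2]
    · -- upper bound
      have h1 : (m:ℝ) * (p:ℝ) ^ 4 ≤ α * (p:ℝ) ^ 3 * (p:ℝ) ^ 4 :=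
        mul_le_mul_of_nonneg_right hm1 (by positivity)
      have h2 : (p:ℝ) ^ 4 ≤ (p:ℝ) ^ 6 := pow_le_pow_right₀ hpr1 (by omega)
      nlinarith [hNupR]
  · -- plane bound
    intro a u v hli
    have hsplit : ((Lfin p η Γ).filter (fun ℓ => ℓ ⊆ affPlane a u v)).card
        ≤ ((Lcov p η Γ).filter (fun ℓ => ℓ ⊆ affPlane a u v)).card
          + ((Lbulk p η Γ).filter (fun ℓ => ℓ ⊆ affPlane a u v)).card := by
      rw [Lfin, Finset.filter_union]
      exact Finset.card_union_le _ _
    have hcov := cov_plane (a := a) (u := u) (v := v) (p := p) (η := η) (Γ := Γ)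
    have hbulk := bulk_plane (a := a) (u := u) (v := v) hp0 hfa hpp hη hΓsub hli
    have hNat : ((Lfin p η Γ).filter (fun ℓ => ℓ ⊆ affPlane a u v)).card
        ≤ m + 2 * p ^ 2 := by
      rw [hcard] at hcov hbulk
      rw [hΓcard] at hbulk
      omega
    have hR : (((Lfin p η Γ).filter (fun ℓ => ℓ ⊆ affPlane a u v)).card : ℝ)
        ≤ (m:ℝ) + 2 * (p:ℝ) ^ 2 := by
      have := (Nat.cast_le (α := ℝ)).mpr hNat
      push_cast at this
      exact this
    have hεp3 : 2 * (p:ℝ) ^ 2 ≤ ε * (p:ℝ) ^ 3 := by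
      have h := mul_le_mul_of_nonneg_right hεp (pow_nonneg hpr0 2)
      have : (0:ℝ) ≤ (p:ℝ) ^ 2 := by positivity
      nlinarith
    calc (((Lfin p η Γ).filter (fun ℓ => ℓ ⊆ affPlane a u v)).card : ℝ)
        ≤ (m:ℝ) + 2 * (p:ℝ) ^ 2 := hR
      _ ≤ α * (p:ℝ) ^ 3 + ε * (p:ℝ) ^ 3 := by linarith
      _ = (α + ε) * (p:ℝ) ^ 3 := by ring
  · -- union size
    have hcover := covered_card hp0 hfa hpp hη hΓsub
    have hY := Ycov_card (p := p) hΓsub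
    rw [hY, hΓcard, hgen, hcard] at hcover
    have hsub1 : p ^ 2 * p - m ≤ p ^ 2 * p ^ 2 := by
      calc p ^ 2 * p - m ≤ p ^ 2 * p := Nat.sub_le _ _
        _ ≤ p ^ 2 * p ^ 2 := Nat.mul_le_mul_left _ (Nat.le_self_pow (by omega) p)
    have hcountR : ((Finset.univ.filter
        (fun x : Fin 3 → F => ∃ ℓ ∈ Lfin p η Γ, x ∈ ℓ)).card : ℝ)
        = ((p:ℝ)^2 * (p:ℝ)^2 - ((p:ℝ)^2 * (p:ℝ) - (m:ℝ))) * (p:ℝ)^2 := by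
      rw [hcover]
      rw [Nat.cast_mul, Nat.cast_sub hsub1, Nat.cast_sub hmp3]
      push_cast
      ring
    rw [hcountR]
    have hεp5 : (p:ℝ) ^ 2 ≤ ε * (p:ℝ) ^ 5 := by
      have h := mul_le_mul_of_nonneg_right hεp (pow_nonneg hpr0 4)
      have h1 : ((p:ℝ)) ^ 2 ≤ ((p:ℝ)) ^ 4 := pow_le_pow_right₀ hpr1 (by omega)
      nlinarith [pow_nonneg hpr0 4]
    rw [abs_le]
    constructor <;> nlinarith [hm1, hm2, hεp5]
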